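/- Let N be a nest on a separable Hilbert space and let (N_α, x_α)_{α∈A} be a net in N × H. The set L := {X ∈ T(N) : lim_α ‖(I − N_α) X x_α‖ = 0} is a left ideal of T(N); moreover L = T(N) if and only if lim_α (I − N_α) x_α = 0. -/

import Mathlib

noncomputable section

universe u

variable {H : Type u} [NormedAddCommGroup H] [InnerProductSpace ℂ H] [CompleteSpace H]
  [TopologicalSpace.SeparableSpace H]

/-- A nest: a linearly ordered set of orthogonal projections containing `0` and `1`. -/
structure Nest (H : Type u) [NormedAddCommGroup H] [InnerProductSpace ℂ H]
    [CompleteSpace H] where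
  carrier : Set (H →L[ℂ] H)
  isProj : ∀ P ∈ carrier, IsSelfAdjoint P ∧ P * P = P
  zero_mem : (0 : H →L[ℂ] H) ∈ carrier
  one_mem : (1 : H →L[ℂ] H) ∈ carrier
  chain : ∀ P ∈ carrier, ∀ Q ∈ carrier, Q * P = P ∨ P * Q = Q

/-- Order on projections: `P ≤ Q` iff `ran P ⊆ ran Q`. -/
def projLE (P Q : H →L[ℂ] H) : Prop := Q * P = P

/-- Strict order on projections. -/
def projLT (P Q : H →L[ℂ] H) : Prop := projLE P Q ∧ P ≠ Q

/-- The nest algebra: all bounded operators leaving invariant the range of every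
projection in the nest, i.e. `(1 - P) X P = 0` for every `P` in the nest. -/
def nestAlgebra (𝒩 : Nest H) : Subalgebra ℂ (H →L[ℂ] H) where
  carrier := {X | ∀ P ∈ 𝒩.carrier, (1 - P) * X * P = 0}
  mul_mem' := by
    intro X Y hX hY P hP
    have hX' := hX P hP
    have hY' := hY P hP
    have hYP : Y * P = P * (Y * P) := by
      have h : (1 - P) * Y * P + P * Y * P = Y * P := by noncomm_ring
      rw [hY', zero_add] at h
      rw [← mul_assoc]; exact h.symm
    calc (1 - P) * (X * Y) * P = (1 - P) * X * (Y * P) := by noncomm_ring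
      _ = (1 - P) * X * (P * (Y * P)) := by rw [← hYP]
      _ = ((1 - P) * X * P) * (Y * P) := by noncomm_ring
      _ = 0 := by rw [hX', zero_mul]
  one_mem' := by
    intro P hP
    have h := (𝒩.isProj P hP).2
    calc (1 - P) * 1 * P = P - P * P := by noncomm_ring
      _ = 0 := by rw [h, sub_self]
  add_mem' := by
    intro X Y hX hY P hP
    have hX' := hX P hP
    have hY' := hY P hP
    calc (1 - P) * (X + Y) * P = (1 - P) * X * P + (1 - P) * Y * P := by noncomm_ring
      _ = 0 := by rw [hX', hY', add_zero]
  zero_mem' := by intro P hP; simp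
  algebraMap_mem' := by
    intro c P hP
    have h := (𝒩.isProj P hP).2
    have h1 : (1 - P) * 1 * P = 0 := by
      calc (1 - P) * 1 * P = P - P * P := by noncomm_ring
        _ = 0 := by rw [h, sub_self]
    calc (1 - P) * (algebraMap ℂ (H →L[ℂ] H) c) * P
        = (1 - P) * (c • (1 : H →L[ℂ] H)) * P := by rw [Algebra.algebraMap_eq_smul_one]
      _ = c • ((1 - P) * 1 * P) := by rw [mul_smul_comm, smul_mul_assoc]
      _ = 0 := by rw [h1, smul_zero]

/-- The left ideal specified by a net `(N_α, x_α)`: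
`{X ∈ T(𝒩) : lim_α ‖(I - N_α) X x_α‖ = 0}`. -/
def constructedIdeal (𝒩 : Nest H) {A : Type u} [Preorder A]
    (Nf : A → H →L[ℂ] H) (x : A → H) : Set (H →L[ℂ] H) :=
  {X | X ∈ nestAlgebra 𝒩 ∧
    Filter.Tendsto (fun α => ‖(1 - Nf α) (X (x α))‖) Filter.atTop (nhds 0)}

/-- `L` is a left ideal of the nest algebra `T(𝒩)`. -/
def IsLeftIdealOf (𝒩 : Nest H) (L : Set (H →L[ℂ] H)) : Prop :=
  L ⊆ (nestAlgebra 𝒩 : Set (H →L[ℂ] H)) ∧ (0 : H →L[ℂ] H) ∈ L ∧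
    (∀ X ∈ L, ∀ Y ∈ L, X + Y ∈ L) ∧ (∀ c : ℂ, ∀ X ∈ L, c • X ∈ L) ∧
    (∀ T ∈ nestAlgebra 𝒩, ∀ X ∈ L, T * X ∈ L)

/-- A left ideal is constructible if it is specified by some net `(N_α, x_α)` in `𝒩 × H`. -/
def IsConstructible (𝒩 : Nest H) (L : Set (H →L[ℂ] H)) : Prop :=
  ∃ (A : Type u) (_ : Preorder A) (_ : IsDirected A (· ≤ ·)) (_ : Nonempty A)
    (Nf : A → H →L[ℂ] H) (x : A → H),
    (∀ α, Nf α ∈ 𝒩.carrier) ∧ L = constructedIdeal 𝒩 Nf x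

/-- A left ideal is strongly constructible if it is specified by some net `(N_α, x_α)`
in which every vector `x_α = (I - N_α) x_α` is a unit vector. -/
def IsStronglyConstructible (𝒩 : Nest H) (L : Set (H →L[ℂ] H)) : Prop :=
  ∃ (A : Type u) (_ : Preorder A) (_ : IsDirected A (· ≤ ·)) (_ : Nonempty A)
    (Nf : A → H →L[ℂ] H) (x : A → H),
    (∀ α, Nf α ∈ 𝒩.carrier) ∧ (∀ α, ‖x α‖ = 1) ∧ (∀ α, (1 - Nf α) (x α) = x α) ∧
    L = constructedIdeal 𝒩 Nf x

/-- the set `L = {X ∈ T(𝒩) : lim_α ‖(I - N_α) X x_α‖ = 0}` determined by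
a net `(N_α, x_α)` in `𝒩 × H` is a left ideal of `T(𝒩)`, and `L = T(𝒩)` iff
`lim_α (I - N_α) x_α = 0`. -/
theorem statement4 (𝒩 : Nest H) {A : Type u} [Preorder A] [IsDirected A (· ≤ ·)]
    [Nonempty A] (Nf : A → H →L[ℂ] H) (hNf : ∀ α, Nf α ∈ 𝒩.carrier) (x : A → H) :
    IsLeftIdealOf 𝒩 (constructedIdeal 𝒩 Nf x) ∧
    (constructedIdeal 𝒩 Nf x = (nestAlgebra 𝒩 : Set (H →L[ℂ] H)) ↔
      Filter.Tendsto (fun α => (1 - Nf α) (x α)) Filter.atTop (nhds 0)) := by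
  -- auxiliary facts
  have projNorm : ∀ (Q : H →L[ℂ] H), IsSelfAdjoint Q → Q * Q = Q → ∀ v : H,
      ‖Q v‖ ≤ ‖v‖ := by
    intro Q hsa hidem v
    have hQQ : Q (Q v) = Q v := by
      have := congrArg (fun f : H →L[ℂ] H => f v) hidem
      simpa using this
    have hinner : (inner ℂ (Q v) (Q v) : ℂ) = inner ℂ v (Q v) := by
      have hadj : ContinuousLinearMap.adjoint Q = Q := hsa
      calc (inner ℂ (Q v) (Q v) : ℂ) = inner ℂ v (ContinuousLinearMap.adjoint Q (Q v)) := by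
            rw [ContinuousLinearMap.adjoint_inner_right]
        _ = inner ℂ v (Q (Q v)) := by rw [hadj]
        _ = inner ℂ v (Q v) := by rw [hQQ]
    have hsq : ‖Q v‖ ^ 2 ≤ ‖v‖ * ‖Q v‖ := by
      have h1 : ‖Q v‖ ^ 2 = ‖(inner ℂ (Q v) (Q v) : ℂ)‖ := by
        rw [inner_self_eq_norm_sq_to_K]
        simp [pow_two]
      rw [h1, hinner]
      exact norm_inner_le_norm v (Q v)
    rcases eq_or_lt_of_le (norm_nonneg (Q v)) with h0 | h0
    · rw [← h0]; exact norm_nonneg v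
    · have hsq' : ‖Q v‖ * ‖Q v‖ ≤ ‖v‖ * ‖Q v‖ := by rw [← pow_two]; exact hsq
      exact le_of_mul_le_mul_right hsq' h0
  have projOneSub : ∀ α, IsSelfAdjoint (1 - Nf α) ∧ (1 - Nf α) * (1 - Nf α) = 1 - Nf α := by
    intro α
    obtain ⟨hsa, hid⟩ := 𝒩.isProj _ (hNf α)
    constructor
    · exact (IsSelfAdjoint.one (H →L[ℂ] H)).sub hsa
    · noncomm_ring [hid]
  -- left ideal
  have hIdeal : IsLeftIdealOf 𝒩 (constructedIdeal 𝒩 Nf x) := by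
    refine ⟨fun X hX => hX.1, ⟨(nestAlgebra 𝒩).zero_mem, by simpa using tendsto_const_nhds⟩,
      ?_, ?_, ?_⟩
    · rintro X ⟨hX, hXt⟩ Y ⟨hY, hYt⟩
      refine ⟨(nestAlgebra 𝒩).add_mem hX hY, ?_⟩
      have := hXt.add hYt
      rw [add_zero] at this
      refine squeeze_zero (fun α => norm_nonneg _) (fun α => ?_) this
      simp only [ContinuousLinearMap.add_apply, map_add]
      exact norm_add_le _ _
    · rintro c X ⟨hX, hXt⟩
      refine ⟨(nestAlgebra 𝒩).smul_mem hX c, ?_⟩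
      have := hXt.const_mul ‖c‖
      rw [mul_zero] at this
      refine squeeze_zero (fun α => norm_nonneg _) (fun α => ?_) this
      simp only [ContinuousLinearMap.smul_apply, map_smul, norm_smul]
      exact le_refl _
    · rintro T hT X ⟨hX, hXt⟩
      refine ⟨(nestAlgebra 𝒩).mul_mem hT hX, ?_⟩
      have key : ∀ α, (1 - Nf α) * T = (1 - Nf α) * T * (1 - Nf α) := by
        intro α
        have h0 := hT (Nf α) (hNf α)
        calc (1 - Nf α) * T = (1 - Nf α) * T * (Nf α) + (1 - Nf α) * T * (1 - Nf α) := by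
              noncomm_ring
          _ = (1 - Nf α) * T * (1 - Nf α) := by rw [h0, zero_add]
      have bound : ∀ α, ‖(1 - Nf α) ((T * X) (x α))‖ ≤ ‖T‖ * ‖(1 - Nf α) (X (x α))‖ := by
        intro α
        obtain ⟨hsa, hid⟩ := projOneSub α
        have h1 : (1 - Nf α) ((T * X) (x α)) =
            (1 - Nf α) (T ((1 - Nf α) (X (x α)))) := by
          have := congrArg (fun f : H →L[ℂ] H => f (X (x α))) (key α)
          simpa using this
        rw [h1]
        calc ‖(1 - Nf α) (T ((1 - Nf α) (X (x α))))‖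
            ≤ ‖T ((1 - Nf α) (X (x α)))‖ := projNorm _ hsa hid _
          _ ≤ ‖T‖ * ‖(1 - Nf α) (X (x α))‖ := T.le_opNorm _
      have := hXt.const_mul ‖T‖
      rw [mul_zero] at this
      exact squeeze_zero (fun α => norm_nonneg _) bound this
  refine ⟨hIdeal, ?_⟩
  constructor
  · intro hEq
    have h1 : (1 : H →L[ℂ] H) ∈ constructedIdeal 𝒩 Nf x := by
      rw [hEq]; exact (nestAlgebra 𝒩).one_mem
    have := h1.2
    rw [tendsto_zero_iff_norm_tendsto_zero]
    simpa using this
  · intro hlim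
    apply Set.Subset.antisymm hIdeal.1
    intro X hX
    refine ⟨hX, ?_⟩
    have key : ∀ α, (1 - Nf α) * X = (1 - Nf α) * X * (1 - Nf α) := by
      intro α
      have h0 := hX (Nf α) (hNf α)
      calc (1 - Nf α) * X = (1 - Nf α) * X * (Nf α) + (1 - Nf α) * X * (1 - Nf α) := by
            noncomm_ring
        _ = (1 - Nf α) * X * (1 - Nf α) := by rw [h0, zero_add]
    have bound : ∀ α, ‖(1 - Nf α) (X (x α))‖ ≤ ‖X‖ * ‖(1 - Nf α) (x α)‖ := by
      intro α
      obtain ⟨hsa, hid⟩ := projOneSub α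
      have h1 : (1 - Nf α) (X (x α)) = (1 - Nf α) (X ((1 - Nf α) (x α))) := by
        have := congrArg (fun f : H →L[ℂ] H => f (x α)) (key α)
        simpa using this
      rw [h1]
      calc ‖(1 - Nf α) (X ((1 - Nf α) (x α)))‖ ≤ ‖X ((1 - Nf α) (x α))‖ :=
            projNorm _ hsa hid _
        _ ≤ ‖X‖ * ‖(1 - Nf α) (x α)‖ := X.le_opNorm _
    have hn : Filter.Tendsto (fun α => ‖(1 - Nf α) (x α)‖) Filter.atTop (nhds 0) := by
      rw [tendsto_zero_iff_norm_tendsto_zero] at hlim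
      exact hlim
    have := hn.const_mul ‖X‖
    rw [mul_zero] at this
    exact squeeze_zero (fun α => norm_nonneg _) bound this
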